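/- Let K_ν denote the modified Bessel function of the second kind. For integers n ≥ 0 and real b ≥ n, the n-th derivative of u ↦ u^b·K_b(u) on (0,∞) satisfies: d^n/du^n (u^b K_b(u)) = Σ_{j=0}^{⌊n/2⌋} (−1)^{n−j} c(n,j) u^{b−j} K_{b−n+j}(u), where c(n,j) = n!/(j!(n−2j)!2^j). -/

import Mathlib

open Real MeasureTheory

/-- The modified Bessel function of the second kind,
`K_ν(x) = ∫_0^∞ e^{−x cosh t} cosh(νt) dt`. -/
noncomputable def besselK (ν x : ℝ) : ℝ :=
  ∫ t in Set.Ioi (0 : ℝ), Real.exp (-x * Real.cosh t) * Real.cosh (ν * t)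

/-- `c(n,j) = n!/(j!·(n−2j)!·2^j)` for `2j ≤ n`, and `0` otherwise. -/
noncomputable def cCoeffR (n j : ℕ) : ℝ :=
  if 2 * j ≤ n then (n.factorial : ℝ) / (j.factorial * (n - 2 * j).factorial * 2 ^ j)
  else 0

lemma key_ineq (a c : ℝ) (hc : 0 < c) (t : ℝ) (ht : 0 ≤ t) :
    a * t - c * Real.exp t ≤ (max (a+1) 0)^2 / c - t := by
  have h1 : (1 + t/2)^2 ≤ Real.exp t := by
    have := Real.add_one_le_exp (t/2)
    have h2 : Real.exp (t/2) ^ 2 = Real.exp t := by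
      rw [← Real.exp_nat_mul]; ring_nf
    nlinarith [Real.exp_pos (t/2), this]
  set A := max (a+1) 0 with hA
  have hA1 : a + 1 ≤ A := le_max_left _ _
  have hA0 : 0 ≤ A := le_max_right _ _
  have key : c * ((a*t - c*Real.exp t) - ((A^2)/c - t)) ≤ 0 := by
    have hc' : c * (A^2/c) = A^2 := by field_simp
    nlinarith [sq_nonneg (c*t/2 - A), mul_le_mul_of_nonneg_left h1 (le_of_lt (mul_pos hc hc)), mul_le_mul_of_nonneg_left hA1 (mul_nonneg hc.le ht), mul_nonneg (mul_pos hc hc).le ht]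
  nlinarith [key]

lemma cosh_le_exp_abs (x : ℝ) : Real.cosh x ≤ Real.exp |x| := by
  rw [Real.cosh_eq]
  have h1 : Real.exp x ≤ Real.exp |x| := Real.exp_le_exp.2 (le_abs_self x)
  have h2 : Real.exp (-x) ≤ Real.exp |x| := Real.exp_le_exp.2 (neg_le_abs x)
  linarith

lemma exp_le_two_cosh (x : ℝ) : Real.exp x ≤ 2 * Real.cosh x := by
  rw [Real.cosh_eq]
  have := (Real.exp_pos (-x)).le
  linarith

lemma integrable_kernel (u : ℝ) (hu : 0 < u) (a M : ℝ) (hM : 0 ≤ M) (f : ℝ → ℝ)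
    (hf : Continuous f) (hbd : ∀ t, 0 ≤ t → |f t| ≤ M * Real.exp (a * t)) :
    IntegrableOn (fun t => Real.exp (-u * Real.cosh t) * f t) (Set.Ioi 0) := by
  set C := (max (a+1) 0)^2 / (u/2) with hC
  apply Integrable.mono' (g := fun t => (M * Real.exp C) * Real.exp (-1 * t))
  · exact ((exp_neg_integrableOn_Ioi 0 one_pos).const_mul _)
  · exact ((Real.continuous_exp.comp (continuous_const.mul Real.continuous_cosh)).mul hf).aestronglyMeasurable
  · rw [ae_restrict_iff' measurableSet_Ioi]
    refine ae_of_all _ fun t ht => ?_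
    have ht' : (0:ℝ) ≤ t := (le_of_lt ht)
    have h1 : |Real.exp (-u * Real.cosh t) * f t| ≤ M * Real.exp (a*t - u * Real.cosh t) := by
      rw [abs_mul, Real.abs_exp]
      calc Real.exp (-u * Real.cosh t) * |f t| ≤ Real.exp (-u * Real.cosh t) * (M * Real.exp (a*t)) :=
            mul_le_mul_of_nonneg_left (hbd t ht') (Real.exp_pos _).le
        _ = M * Real.exp (a*t - u * Real.cosh t) := by
            rw [show a*t - u * Real.cosh t = (-u * Real.cosh t) + a*t by ring, Real.exp_add]; ring
    have h2 : a*t - u * Real.cosh t ≤ C - t := by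
      have h3 : (u/2) * Real.exp t ≤ u * Real.cosh t := by
        have := exp_le_two_cosh t
        nlinarith
      have := key_ineq a (u/2) (by linarith) t ht'
      linarith
    calc ‖Real.exp (-u * Real.cosh t) * f t‖ ≤ M * Real.exp (a*t - u*Real.cosh t) := h1
      _ ≤ M * Real.exp (C - t) := mul_le_mul_of_nonneg_left (Real.exp_le_exp.2 h2) hM
      _ = M * Real.exp C * Real.exp (-1*t) := by rw [Real.exp_sub, neg_one_mul, Real.exp_neg, div_eq_mul_inv]; ring

lemma abs_cosh_le_exp (ν t : ℝ) (ht : 0 ≤ t) : |Real.cosh (ν*t)| ≤ Real.exp (|ν| * t) := by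
  rw [abs_of_pos (Real.cosh_pos _)]
  calc Real.cosh (ν*t) ≤ Real.exp |ν * t| := cosh_le_exp_abs _
    _ = Real.exp (|ν| * t) := by rw [abs_mul, abs_of_nonneg ht]

lemma abs_sinh_le_exp (ν t : ℝ) (ht : 0 ≤ t) : |Real.sinh (ν*t)| ≤ Real.exp (|ν| * t) := by
  calc |Real.sinh (ν*t)| = Real.sinh |ν * t| := Real.abs_sinh _
    _ ≤ Real.cosh |ν * t| := (Real.sinh_lt_cosh _).le
    _ ≤ Real.exp |ν * t| := by simpa using cosh_le_exp_abs |ν * t|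
    _ = Real.exp (|ν| * t) := by rw [abs_mul, abs_of_nonneg ht]

lemma besselK_integrable (ν u : ℝ) (hu : 0 < u) :
    IntegrableOn (fun t => Real.exp (-u * Real.cosh t) * Real.cosh (ν*t)) (Set.Ioi 0) :=
  integrable_kernel u hu |ν| 1 zero_le_one _ (Real.continuous_cosh.comp (continuous_const.mul continuous_id))
    (fun t ht => by rw [one_mul]; exact abs_cosh_le_exp ν t ht)

lemma besselK_integrable_cosh_mul (ν u : ℝ) (hu : 0 < u) :
    IntegrableOn (fun t => Real.exp (-u * Real.cosh t) * (Real.cosh t * Real.cosh (ν*t))) (Set.Ioi 0) := by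
  apply integrable_kernel u hu (|ν|+1) 1 zero_le_one _
    (Real.continuous_cosh.mul (Real.continuous_cosh.comp (continuous_const.mul continuous_id)))
  intro t ht
  rw [one_mul]
  show |Real.cosh t * Real.cosh (ν*t)| ≤ _
  rw [abs_mul]
  calc |Real.cosh t| * |Real.cosh (ν*t)| ≤ Real.exp (|(1:ℝ)| * t) * Real.exp (|ν| * t) := by
        apply mul_le_mul _ (abs_cosh_le_exp ν t ht) (abs_nonneg _) (Real.exp_pos _).le
        simpa using abs_cosh_le_exp 1 t ht
    _ = Real.exp ((|ν| + 1) * t) := by rw [← Real.exp_add]; norm_num; ring_nf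

lemma besselK_integrable_sinh_mul (ν u : ℝ) (hu : 0 < u) :
    IntegrableOn (fun t => Real.exp (-u * Real.cosh t) * (Real.sinh t * Real.sinh (ν*t))) (Set.Ioi 0) := by
  apply integrable_kernel u hu (|ν|+1) 1 zero_le_one _
    (Real.continuous_sinh.mul (Real.continuous_sinh.comp (continuous_const.mul continuous_id)))
  intro t ht
  rw [one_mul]
  show |Real.sinh t * Real.sinh (ν*t)| ≤ _
  rw [abs_mul]
  calc |Real.sinh t| * |Real.sinh (ν*t)| ≤ Real.exp (|(1:ℝ)| * t) * Real.exp (|ν| * t) := by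
        apply mul_le_mul _ (abs_sinh_le_exp ν t ht) (abs_nonneg _) (Real.exp_pos _).le
        simpa using abs_sinh_le_exp 1 t ht
    _ = Real.exp ((|ν| + 1) * t) := by rw [← Real.exp_add]; norm_num; ring_nf

lemma cosh_mul_cosh_eq (x y : ℝ) :
    Real.cosh x * Real.cosh y = (Real.cosh (x + y) + Real.cosh (x - y)) / 2 := by
  rw [Real.cosh_add, Real.cosh_sub]; ring

lemma sinh_mul_sinh_eq (x y : ℝ) :
    Real.sinh x * Real.sinh y = (Real.cosh (x + y) - Real.cosh (x - y)) / 2 := by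
  rw [Real.cosh_add, Real.cosh_sub]; ring

lemma hasDerivAt_besselK (ν u : ℝ) (hu : 0 < u) :
    HasDerivAt (besselK ν) (-(besselK (ν+1) u + besselK (ν-1) u)/2) u := by
  have hmain := hasDerivAt_integral_of_dominated_loc_of_deriv_le
    (μ := volume.restrict (Set.Ioi (0:ℝ))) (x₀ := u)
    (F := fun x t => Real.exp (-x * Real.cosh t) * Real.cosh (ν*t))
    (F' := fun x t => (-Real.cosh t) * (Real.exp (-x * Real.cosh t) * Real.cosh (ν*t)))
    (bound := fun t => Real.cosh t * (Real.exp (-(u/2) * Real.cosh t) * Real.cosh (ν*t)))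
    (Metric.ball_mem_nhds u (half_pos hu))
    (Filter.Eventually.of_forall fun x =>
      (((Real.continuous_exp.comp ((continuous_const.mul Real.continuous_cosh))).mul
        (Real.continuous_cosh.comp (continuous_const.mul continuous_id))).aestronglyMeasurable))
    (besselK_integrable ν u hu)
    ((((Real.continuous_cosh.neg).mul
      ((Real.continuous_exp.comp ((continuous_const.mul Real.continuous_cosh))).mul
        (Real.continuous_cosh.comp (continuous_const.mul continuous_id)))).aestronglyMeasurable))
    ?_ ?_ ?_
  · have heq : besselK ν = fun x => ∫ t in Set.Ioi (0:ℝ), Real.exp (-x * Real.cosh t) * Real.cosh (ν*t) := rfl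
    rw [heq]
    refine hmain.2.congr_deriv (Eq.symm ?_)
    have h1 : ∀ t : ℝ, (-Real.cosh t) * (Real.exp (-u * Real.cosh t) * Real.cosh (ν*t)) =
        (-(1:ℝ)/2) * (Real.exp (-u * Real.cosh t) * Real.cosh ((ν+1)*t)) +
        (-(1:ℝ)/2) * (Real.exp (-u * Real.cosh t) * Real.cosh ((ν-1)*t)) := by
      intro t
      have h2 : Real.cosh t * Real.cosh (ν*t) =
          (Real.cosh ((ν+1)*t) + Real.cosh ((ν-1)*t)) / 2 := by
        have := cosh_mul_cosh_eq t (ν*t)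
        rw [show t + ν*t = (ν+1)*t by ring] at this
        rw [show t - ν*t = -((ν-1)*t) by ring, Real.cosh_neg] at this
        exact this
      linear_combination (-Real.exp (-u * Real.cosh t)) * h2
    rw [show (∫ t in Set.Ioi (0:ℝ), (-Real.cosh t) * (Real.exp (-u * Real.cosh t) * Real.cosh (ν*t)))
        = ∫ t in Set.Ioi (0:ℝ), ((-(1:ℝ)/2) * (Real.exp (-u * Real.cosh t) * Real.cosh ((ν+1)*t)) +
          (-(1:ℝ)/2) * (Real.exp (-u * Real.cosh t) * Real.cosh ((ν-1)*t)))
        from by simp only [h1]]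
    rw [integral_add ((besselK_integrable (ν+1) u hu).const_mul _)
      ((besselK_integrable (ν-1) u hu).const_mul _), integral_const_mul, integral_const_mul]
    show -(besselK (ν+1) u + besselK (ν-1) u)/2 = _
    unfold besselK
    ring
  · -- bound
    refine Filter.Eventually.of_forall fun t => fun x hx => ?_
    have hx' : u/2 < x := by
      rw [Metric.mem_ball, Real.dist_eq, abs_lt] at hx
      linarith [hx.1]
    have hc := Real.cosh_pos t
    rw [norm_mul, norm_neg, Real.norm_eq_abs, Real.norm_eq_abs, abs_of_pos hc, abs_mul, Real.abs_exp]
    have h3 : Real.exp (-x * Real.cosh t) ≤ Real.exp (-(u/2) * Real.cosh t) := by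
      apply Real.exp_le_exp.2; nlinarith
    calc Real.cosh t * (Real.exp (-x * Real.cosh t) * |Real.cosh (ν*t)|)
        ≤ Real.cosh t * (Real.exp (-(u/2) * Real.cosh t) * |Real.cosh (ν*t)|) := by
          apply mul_le_mul_of_nonneg_left (mul_le_mul_of_nonneg_right h3 (abs_nonneg _)) hc.le
      _ = Real.cosh t * (Real.exp (-(u/2) * Real.cosh t) * Real.cosh (ν*t)) := by
          rw [abs_of_pos (Real.cosh_pos _)]
  · -- bound integrable
    have := besselK_integrable_cosh_mul ν (u/2) (half_pos hu)
    apply this.congr_fun ?_ measurableSet_Ioi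
    intro t _; ring
  · -- differentiability
    refine Filter.Eventually.of_forall fun t => fun x hx => ?_
    have h : HasDerivAt (fun x : ℝ => Real.exp (-x * Real.cosh t) * Real.cosh (ν*t))
        ((Real.exp (-x * Real.cosh t) * (-Real.cosh t)) * Real.cosh (ν*t)) x := by
      have h0 : HasDerivAt (fun x : ℝ => -x * Real.cosh t) (-Real.cosh t) x := by
        simpa using ((hasDerivAt_id x).neg.mul_const (Real.cosh t))
      exact (h0.exp).mul_const _
    refine h.congr_deriv ?_; ring

lemma besselK_recurrence (ν u : ℝ) (hu : 0 < u) :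
    u * (besselK (ν+1) u - besselK (ν-1) u) = 2 * ν * besselK ν u := by
  set F : ℝ → ℝ := fun t => Real.exp (-u * Real.cosh t) * Real.sinh (ν*t) with hF
  set F' : ℝ → ℝ := fun t => (Real.exp (-u * Real.cosh t) * (-u * Real.sinh t)) * Real.sinh (ν*t)
    + Real.exp (-u * Real.cosh t) * (Real.cosh (ν*t) * ν) with hF'
  have hderiv : ∀ t : ℝ, HasDerivAt F (F' t) t := by
    intro t
    have h1 : HasDerivAt (fun t => Real.exp (-u * Real.cosh t)) (Real.exp (-u * Real.cosh t) * (-u * Real.sinh t)) t := by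
      have := ((Real.hasDerivAt_cosh t).const_mul (-u)).exp
      simpa [mul_comm] using this
    have h2 : HasDerivAt (fun t => Real.sinh (ν*t)) (Real.cosh (ν*t) * ν) t := by
      have := ((hasDerivAt_id t).const_mul ν).sinh
      simpa using this
    exact h1.mul h2
  have hint : IntegrableOn F' (Set.Ioi 0) := by
    have hi1 := (besselK_integrable_sinh_mul ν u hu).const_mul (-u)
    have hi2 := (besselK_integrable ν u hu).const_mul ν
    apply MeasureTheory.IntegrableOn.congr_fun (hi1.add hi2) ?_ measurableSet_Ioi
    intro t _
    simp only [hF', Pi.add_apply]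
    ring
  have htend : Filter.Tendsto F Filter.atTop (nhds 0) := by
    set C := (max (|ν|+1) 0)^2 / (u/2) with hC
    apply squeeze_zero_norm' (a := fun t => Real.exp C * Real.exp (-1 * t))
    · filter_upwards [Filter.eventually_ge_atTop (0:ℝ)] with t ht
      have h1 : ‖F t‖ ≤ Real.exp (|ν| * t - u * Real.cosh t) := by
        rw [hF, Real.norm_eq_abs, abs_mul, Real.abs_exp, Real.exp_sub]
        calc Real.exp (-u * Real.cosh t) * |Real.sinh (ν*t)|
            ≤ Real.exp (-u * Real.cosh t) * Real.exp (|ν| * t) :=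
              mul_le_mul_of_nonneg_left (abs_sinh_le_exp ν t ht) (Real.exp_pos _).le
          _ = Real.exp (|ν| * t) / Real.exp (u * Real.cosh t) := by
              rw [eq_div_iff (Real.exp_pos _).ne', mul_comm, ← mul_assoc, ← Real.exp_add]
              rw [show u * Real.cosh t + -u * Real.cosh t = 0 by ring, Real.exp_zero, one_mul]
      have h2 : |ν| * t - u * Real.cosh t ≤ C - t := by
        have h3 : (u/2) * Real.exp t ≤ u * Real.cosh t := by
          have := exp_le_two_cosh t; nlinarith
        have := key_ineq (|ν|) (u/2) (by linarith) t ht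
        linarith
      calc ‖F t‖ ≤ Real.exp (|ν| * t - u * Real.cosh t) := h1
        _ ≤ Real.exp (C - t) := Real.exp_le_exp.2 h2
        _ = Real.exp C * Real.exp (-1*t) := by
            rw [Real.exp_sub, neg_one_mul, Real.exp_neg, div_eq_mul_inv]
    · have h4 : Filter.Tendsto (fun t : ℝ => Real.exp (-1*t)) Filter.atTop (nhds 0) := by
        have : Filter.Tendsto (fun t : ℝ => -1*t) Filter.atTop Filter.atBot := by
          simpa using (Filter.tendsto_neg_atBot_iff (α := ℝ)).mpr Filter.tendsto_id
        exact Real.tendsto_exp_atBot.comp this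
      simpa using h4.const_mul (Real.exp C)
  have h0 : ∫ t in Set.Ioi (0:ℝ), F' t = 0 := by
    rw [integral_Ioi_of_hasDerivAt_of_tendsto (hderiv 0).continuousAt.continuousWithinAt
      (fun t _ => hderiv t) hint htend]
    simp [hF]
  have hsinh : ∫ t in Set.Ioi (0:ℝ), Real.exp (-u * Real.cosh t) * (Real.sinh t * Real.sinh (ν*t))
      = (besselK (ν+1) u - besselK (ν-1) u) / 2 := by
    have h1 : ∀ t : ℝ, Real.exp (-u * Real.cosh t) * (Real.sinh t * Real.sinh (ν*t)) =
        ((1:ℝ)/2) * (Real.exp (-u * Real.cosh t) * Real.cosh ((ν+1)*t)) +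
        (-(1:ℝ)/2) * (Real.exp (-u * Real.cosh t) * Real.cosh ((ν-1)*t)) := by
      intro t
      have h2 := sinh_mul_sinh_eq t (ν*t)
      rw [show t + ν*t = (ν+1)*t by ring] at h2
      rw [show t - ν*t = -((ν-1)*t) by ring, Real.cosh_neg] at h2
      linear_combination (Real.exp (-u * Real.cosh t)) * h2
    rw [show (∫ t in Set.Ioi (0:ℝ), Real.exp (-u * Real.cosh t) * (Real.sinh t * Real.sinh (ν*t)))
        = ∫ t in Set.Ioi (0:ℝ), (((1:ℝ)/2) * (Real.exp (-u * Real.cosh t) * Real.cosh ((ν+1)*t)) +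
          (-(1:ℝ)/2) * (Real.exp (-u * Real.cosh t) * Real.cosh ((ν-1)*t)))
        from by simp only [h1]]
    rw [integral_add ((besselK_integrable (ν+1) u hu).const_mul _)
      ((besselK_integrable (ν-1) u hu).const_mul _), integral_const_mul, integral_const_mul]
    show _ = (besselK (ν+1) u - besselK (ν-1) u)/2
    unfold besselK
    ring
  have hsplit : ∫ t in Set.Ioi (0:ℝ), F' t =
      (-u) * ((besselK (ν+1) u - besselK (ν-1) u) / 2) + ν * besselK ν u := by
    have h1 : ∀ t : ℝ, F' t = (-u) * (Real.exp (-u * Real.cosh t) * (Real.sinh t * Real.sinh (ν*t)))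
        + ν * (Real.exp (-u * Real.cosh t) * Real.cosh (ν*t)) := by
      intro t; simp only [hF']; ring
    rw [show (∫ t in Set.Ioi (0:ℝ), F' t) =
        ∫ t in Set.Ioi (0:ℝ), ((-u) * (Real.exp (-u * Real.cosh t) * (Real.sinh t * Real.sinh (ν*t)))
        + ν * (Real.exp (-u * Real.cosh t) * Real.cosh (ν*t))) from by simp only [h1]]
    rw [integral_add ((besselK_integrable_sinh_mul ν u hu).const_mul _)
      ((besselK_integrable ν u hu).const_mul _), integral_const_mul, integral_const_mul, hsinh]
    rfl
  rw [hsplit] at h0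
  linarith

lemma hasDerivAt_rpow_mul_besselK (a ν u : ℝ) (hu : 0 < u) :
    HasDerivAt (fun x : ℝ => x ^ a * besselK ν x)
      ((a - ν) * u ^ (a-1) * besselK ν u - u ^ a * besselK (ν-1) u) u := by
  have h1 : HasDerivAt (fun x : ℝ => x ^ a) (a * u ^ (a-1)) u :=
    Real.hasDerivAt_rpow_const (Or.inl hu.ne')
  have h3 := h1.mul (hasDerivAt_besselK ν u hu)
  refine h3.congr_deriv (Eq.symm ?_)
  have hrec := besselK_recurrence ν u hu
  have hupow : u ^ a = u ^ (a-1) * u := by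
    rw [← Real.rpow_add_one hu.ne' (a-1)]; norm_num
  rw [hupow]
  linear_combination (u ^ (a-1) / 2) * hrec

lemma cCoeffR_zero_right (n : ℕ) : cCoeffR n 0 = 1 := by
  simp [cCoeffR, Nat.factorial_pos n, (Nat.cast_pos.2 (Nat.factorial_pos n)).ne']

lemma cCoeffR_eq_zero {n j : ℕ} (h : n < 2*j) : cCoeffR n j = 0 := by
  simp [cCoeffR, Nat.not_le.2 h]

lemma cCoeffR_succ_succ (n j : ℕ) :
    cCoeffR (n+1) (j+1) = cCoeffR n (j+1) + ((n:ℝ) - 2*j) * cCoeffR n j := by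
  by_cases hb : 2*j+2 ≤ n
  · obtain ⟨m, hm⟩ : ∃ m, n = m + 2*j + 2 := ⟨n - (2*j+2), by omega⟩
    subst hm
    rw [cCoeffR, cCoeffR, cCoeffR, if_pos (by omega), if_pos (by omega), if_pos (by omega)]
    rw [show m + 2*j + 2 + 1 - 2*(j+1) = m + 1 by omega,
        show m + 2*j + 2 - 2*(j+1) = m by omega,
        show m + 2*j + 2 - 2*j = m + 2 by omega,
        show m + 2*j + 2 + 1 = (m + 2*j + 2) + 1 by omega]
    rw [Nat.factorial_succ (m + 2*j + 2), Nat.factorial_succ (m+1), Nat.factorial_succ m,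
        Nat.factorial_succ j, pow_succ]
    have h1 : ((j.factorial : ℝ)) ≠ 0 := Nat.cast_ne_zero.2 (Nat.factorial_pos j).ne'
    have h2 : ((m.factorial : ℝ)) ≠ 0 := Nat.cast_ne_zero.2 (Nat.factorial_pos m).ne'
    have h3 : ((2:ℝ))^j ≠ 0 := pow_ne_zero _ two_ne_zero
    have h4 : ((m:ℝ)+1) ≠ 0 := by positivity
    have h5 : ((j:ℝ)+1) ≠ 0 := by positivity
    push_cast
    field_simp
    ring
  · by_cases hb2 : 2*j+1 = n
    · subst hb2
      rw [cCoeffR, cCoeffR, cCoeffR, if_pos (by omega), if_neg (by omega), if_pos (by omega)]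
      rw [show 2*j+1+1 - 2*(j+1) = 0 by omega, show 2*j+1 - 2*j = 1 by omega]
      rw [show 2*j+1+1 = (2*j+1) + 1 by omega, Nat.factorial_succ (2*j+1),
          Nat.factorial_succ j, pow_succ]
      have h1 : ((j.factorial : ℝ)) ≠ 0 := Nat.cast_ne_zero.2 (Nat.factorial_pos j).ne'
      have h3 : ((2:ℝ))^j ≠ 0 := pow_ne_zero _ two_ne_zero
      have h5 : ((j:ℝ)+1) ≠ 0 := by positivity
      push_cast
      rw [Nat.factorial_zero, Nat.factorial_one]
      field_simp
      ring
    · rw [cCoeffR, cCoeffR, if_neg (by omega), if_neg (by omega)]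
      by_cases hb3 : 2*j ≤ n
      · have hn : n = 2*j := by omega
        rw [hn]
        push_cast
        ring
      · rw [cCoeffR_eq_zero (by omega)]
        ring

lemma sum_ext (n : ℕ) (b u : ℝ) :
    (∑ j ∈ Finset.range (n / 2 + 1),
      (-1 : ℝ) ^ (n - j) * cCoeffR n j * u ^ (b - j) * besselK (b - n + j) u)
    = ∑ j ∈ Finset.range (n + 1),
      (-1 : ℝ) ^ (n - j) * cCoeffR n j * u ^ (b - j) * besselK (b - n + j) u := by
  apply Finset.sum_subset
  · intro j hj
    simp only [Finset.mem_range] at *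
    omega
  · intro j hj hj2
    simp only [Finset.mem_range] at hj hj2
    rw [cCoeffR_eq_zero (show n < 2*j by omega)]
    ring

lemma sum_step (n : ℕ) (b u : ℝ) :
    ∑ j ∈ Finset.range (n+1), (-1:ℝ)^(n-j) * cCoeffR n j *
      (((n:ℝ) - 2*j) * u^(b - j - 1) * besselK (b - n + j) u
        - u^(b - j) * besselK (b - n + j - 1) u)
    = ∑ j ∈ Finset.range (n+2),
        (-1:ℝ)^(n+1-j) * cCoeffR (n+1) j * u^(b - j) * besselK (b - (n+1 : ℕ) + j) u := by
  set p : ℕ → ℝ := fun i => (-1:ℝ)^(n-i) * cCoeffR n i *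
      (((n:ℝ) - 2*i) * u^(b - i - 1) * besselK (b - n + i) u) with hp
  set q : ℕ → ℝ := fun i => (-1:ℝ)^(n-i) * cCoeffR n i *
      (u^(b - i) * besselK (b - n + i - 1) u) with hq
  set h : ℕ → ℝ := fun j => (-1:ℝ)^(n+1-j) * cCoeffR (n+1) j * u^(b - j)
      * besselK (b - (n+1 : ℕ) + j) u with hh
  have claim1 : ∀ i ∈ Finset.range (n+1), p i = h (i+1) + q (i+1) := by
    intro i hi
    simp only [Finset.mem_range] at hi
    by_cases hin : i = n
    · rw [hin]
      have hz1 : cCoeffR (n+1) (n+1) = 0 := cCoeffR_eq_zero (by omega)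
      have hz2 : cCoeffR n (n+1) = 0 := cCoeffR_eq_zero (by omega)
      rcases Nat.eq_zero_or_pos n with h0 | h0
      · subst h0
        simp only [hp, hq, hh, hz1, hz2]
        norm_num
      · have hz3 : cCoeffR n n = 0 := cCoeffR_eq_zero (by omega)
        simp only [hp, hq, hh, hz1, hz2, hz3]
        ring
    · have hin' : i < n := by omega
      obtain ⟨k, hk⟩ : ∃ k, n - (i+1) = k := ⟨n - (i+1), rfl⟩
      simp only [hp, hq, hh]
      rw [cCoeffR_succ_succ n i]
      rw [show n + 1 - (i+1) = k + 1 by omega, show n - i = k + 1 by omega,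
          show n - (i+1) = k by omega]
      push_cast
      rw [show b - ((i:ℝ)+1) = b - i - 1 by ring,
          show b - ((n:ℝ)+1) + ((i:ℝ)+1) = b - n + i by ring]
      ring
  have hq_top : q (n+1) = 0 := by
    simp only [hq, cCoeffR_eq_zero (show n < 2*(n+1) by omega)]
    ring
  have hh0 : h 0 = -(q 0) := by
    simp only [hh, hq, cCoeffR_zero_right, Nat.sub_zero]
    push_cast
    rw [show b - (0:ℝ) = b by ring, show b - ((n:ℝ)+1) + (0:ℝ) = b - n + 0 - 1 by ring,
        pow_succ]
    ring
  have hsplit : (∑ j ∈ Finset.range (n+1), (-1:ℝ)^(n-j) * cCoeffR n j *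
      (((n:ℝ) - 2*j) * u^(b - j - 1) * besselK (b - n + j) u
        - u^(b - j) * besselK (b - n + j - 1) u))
      = (∑ i ∈ Finset.range (n+1), p i) - (∑ i ∈ Finset.range (n+1), q i) := by
    rw [← Finset.sum_sub_distrib]
    apply Finset.sum_congr rfl
    intro j _
    simp only [hp, hq]
    ring
  have hQ : (∑ i ∈ Finset.range (n+1), q i)
      = (∑ i ∈ Finset.range (n+1), q (i+1)) + q 0 := by
    have := Finset.sum_range_succ' q (n+1)
    rw [Finset.sum_range_succ q (n+1), hq_top, add_zero] at this
    exact this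
  have hH : (∑ j ∈ Finset.range (n+2), h j)
      = (∑ i ∈ Finset.range (n+1), h (i+1)) + h 0 := Finset.sum_range_succ' h (n+1)
  rw [hsplit, Finset.sum_congr rfl claim1, hQ, hH, Finset.sum_add_distrib, hh0]
  ring

/-- For `b ≥ n`, the `n`-th derivative of `u ↦ u^b K_b(u)` on `(0,∞)` is
`Σ_{j=0}^{⌊n/2⌋} (−1)^{n−j} c(n,j) u^{b−j} K_{b−n+j}(u)`. -/
theorem iteratedDeriv_rpow_mul_besselK (n : ℕ) (b : ℝ) (hb : (n : ℝ) ≤ b)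
    (u : ℝ) (hu : 0 < u) :
    iteratedDerivWithin n (fun u : ℝ => u ^ b * besselK b u) (Set.Ioi 0) u =
      ∑ j ∈ Finset.range (n / 2 + 1),
        (-1 : ℝ) ^ (n - j) * cCoeffR n j * u ^ (b - j) *
          besselK (b - n + j) u := by
  induction n generalizing u with
  | zero =>
    rw [iteratedDerivWithin_zero]
    simp [cCoeffR_zero_right]
  | succ n ih =>
    have hbn : (n:ℝ) ≤ b := by push_cast at hb ⊢; linarith
    have hUD : UniqueDiffWithinAt ℝ (Set.Ioi (0:ℝ)) u := isOpen_Ioi.uniqueDiffWithinAt hu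
    rw [iteratedDerivWithin_succ]
    set S : ℝ → ℝ := fun x => ∑ j ∈ Finset.range (n + 1),
      (-1 : ℝ) ^ (n - j) * cCoeffR n j * x ^ (b - j) * besselK (b - n + j) x with hS
    have hcongr : derivWithin (iteratedDerivWithin n (fun u : ℝ => u ^ b * besselK b u) (Set.Ioi 0))
        (Set.Ioi 0) u = derivWithin S (Set.Ioi 0) u := by
      apply derivWithin_congr
      · intro y hy
        rw [ih hbn y hy]
        exact sum_ext n b y
      · rw [ih hbn u hu]
        exact sum_ext n b u
    have hder : HasDerivAt S (∑ j ∈ Finset.range (n+1), (-1:ℝ)^(n-j) * cCoeffR n j *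
        (((n:ℝ) - 2*j) * u^(b - j - 1) * besselK (b - n + j) u
          - u^(b - j) * besselK (b - n + j - 1) u)) u := by
      apply HasDerivAt.fun_sum
      intro j hj
      have h := (hasDerivAt_rpow_mul_besselK (b - j) (b - n + j) u hu).const_mul
        ((-1:ℝ)^(n-j) * cCoeffR n j)
      refine HasDerivAt.congr_deriv (HasDerivAt.congr_of_eventuallyEq h (Filter.Eventually.of_forall fun x => ?_)) ?_
      · dsimp only; ring
      · ring
    rw [hcongr, hder.hasDerivWithinAt.derivWithin hUD, sum_step n b u]
    rw [sum_ext (n+1) b u]
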